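/- Let ρ₁, ρ₂ > 0 and γ > 0, and set c = γ/√(ρ₁ρ₂). Consider the 4×4 complex matrix A_γ with rows (0, −1, 0, −γ/ρ₁), (1, 0, γ/ρ₁, 0), (0, −γ/ρ₂, 0, −1), (γ/ρ₂, 0, 1, 0). Then the characteristic polynomial of A_γ equals (λ² + (1+c)²)(λ² + (1−c)²); in particular its eigenvalues (with multiplicity) are ±i(1+c) and ±i(1−c), and whenever γ ≠ √(ρ₁ρ₂) these are four distinct purely imaginary numbers. (This shows the two poles of the reversed b-coupled spin-oscillator are non-degenerate fixed points of elliptic-elliptic type.) -/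

import Mathlib

open Polynomial Complex

private lemma charpoly_aux (t s d : ℂ) (h : t * s = d) :
    (!![0, -1, 0, -t; 1, 0, t, 0; 0, -s, 0, -1; s, 0, 1, 0] : Matrix (Fin 4) (Fin 4) ℂ).charpoly =
      X ^ 4 + C (2 + 2 * d) * X ^ 2 + C ((1 - d) ^ 2) := by
  rw [Matrix.charpoly]
  have hc : (!![0, -1, 0, -t; 1, 0, t, 0; 0, -s, 0, -1; s, 0, 1, 0] :
      Matrix (Fin 4) (Fin 4) ℂ).charmatrix
      = !![X, 1, 0, C t; -1, X, -C t, 0; 0, C s, X, 1; -C s, 0, -1, X] := by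
    ext i j
    fin_cases i <;> fin_cases j <;> simp [Matrix.charmatrix_apply]
  have hC : C t * C s = C d := by rw [← _root_.map_mul, h]
  rw [hc, show (!![X, 1, 0, C t; -1, X, -C t, 0; 0, C s, X, 1; -C s, 0, -1, X] :
      Matrix (Fin 4) (Fin 4) ℂ[X]).det = _ from Matrix.det_succ_row_zero _]
  simp [Fin.sum_univ_succ, Matrix.det_fin_three, Fin.succAbove, Fin.castSucc,
    Fin.castAdd, Fin.castLE, Fin.succ, map_ofNat]
  linear_combination ((2 : ℂ[X]) * X ^ 2 - 2 + C t * C s + C d) * hC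

private lemma factor_aux (a : ℂ) :
    (X - C (I * a)) * (X + C (I * a)) = X ^ 2 + C (a ^ 2) := by
  have h : C (I * a) ^ 2 = -C (a ^ 2) := by
    rw [← map_pow, show (I * a) ^ 2 = -(a ^ 2) by rw [mul_pow, I_sq]; ring, map_neg]
  linear_combination -h

private lemma key_aux (x y : ℝ) (hxy : x ≠ y) : I * (x : ℂ) ≠ I * (y : ℂ) := by
  intro h
  exact hxy (by exact_mod_cast mul_left_cancel₀ I_ne_zero h)

/-- At the two poles of the reversed b-coupled spin-oscillator, the linearized
operator `Ω⁻¹d²L + 2γ·Ω⁻¹d²H` has characteristic polynomial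
`(λ² + (1+c)²)(λ² + (1−c)²)` with `c = γ/√(ρ₁ρ₂)`; in particular its
eigenvalues are `±i(1+c)` and `±i(1−c)`, and when `γ ≠ √(ρ₁ρ₂)` these are four
distinct purely imaginary numbers.  Hence the poles are non-degenerate fixed
points of elliptic-elliptic type. -/
theorem reversed_bCSO_poles_elliptic_elliptic (ρ₁ ρ₂ γ : ℝ)
    (hρ₁ : 0 < ρ₁) (hρ₂ : 0 < ρ₂) (hγ : 0 < γ) :
    let c : ℝ := γ / Real.sqrt (ρ₁ * ρ₂)
    let A : Matrix (Fin 4) (Fin 4) ℂ :=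
      !![0, -1, 0, -(γ : ℂ) / (ρ₁ : ℂ);
         1, 0, (γ : ℂ) / (ρ₁ : ℂ), 0;
         0, -(γ : ℂ) / (ρ₂ : ℂ), 0, -1;
         (γ : ℂ) / (ρ₂ : ℂ), 0, 1, 0]
    A.charpoly = (X ^ 2 + C (((1 + c : ℝ) : ℂ) ^ 2)) * (X ^ 2 + C (((1 - c : ℝ) : ℂ) ^ 2)) ∧
      A.charpoly =
        (X - C (I * ((1 + c : ℝ) : ℂ))) * (X + C (I * ((1 + c : ℝ) : ℂ))) *
          (X - C (I * ((1 - c : ℝ) : ℂ))) * (X + C (I * ((1 - c : ℝ) : ℂ))) ∧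
      (γ ≠ Real.sqrt (ρ₁ * ρ₂) →
        List.Pairwise (· ≠ ·)
          [I * ((1 + c : ℝ) : ℂ), -(I * ((1 + c : ℝ) : ℂ)),
           I * ((1 - c : ℝ) : ℂ), -(I * ((1 - c : ℝ) : ℂ))]) := by
  intro c A
  have hs : 0 < Real.sqrt (ρ₁ * ρ₂) := Real.sqrt_pos.2 (mul_pos hρ₁ hρ₂)
  have hc0 : 0 < c := div_pos hγ hs
  have hρ₁' : (ρ₁ : ℂ) ≠ 0 := by exact_mod_cast hρ₁.ne'
  have hρ₂' : (ρ₂ : ℂ) ≠ 0 := by exact_mod_cast hρ₂.ne'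
  have hcr : c ^ 2 = γ ^ 2 / (ρ₁ * ρ₂) := by
    rw [show c = γ / Real.sqrt (ρ₁ * ρ₂) from rfl, div_pow,
      Real.sq_sqrt (mul_pos hρ₁ hρ₂).le]
  have hd : ((γ : ℂ) / ρ₁) * ((γ : ℂ) / ρ₂) = ((c : ℝ) : ℂ) ^ 2 := by
    have : ((c ^ 2 : ℝ) : ℂ) = ((γ : ℂ) ^ 2) / ((ρ₁ : ℂ) * ρ₂) := by
      rw [hcr]; push_cast; ring
    field_simp
    field_simp at this
    push_cast at this
    linear_combination -this
  have hA : A = !![0, -1, 0, -((γ : ℂ) / ρ₁); 1, 0, (γ : ℂ) / ρ₁, 0;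
      0, -((γ : ℂ) / ρ₂), 0, -1; (γ : ℂ) / ρ₂, 0, 1, 0] := by
    show (!![0, -1, 0, -(γ : ℂ) / (ρ₁ : ℂ); 1, 0, (γ : ℂ) / (ρ₁ : ℂ), 0;
      0, -(γ : ℂ) / (ρ₂ : ℂ), 0, -1; (γ : ℂ) / (ρ₂ : ℂ), 0, 1, 0] : Matrix (Fin 4) (Fin 4) ℂ) = _
    rw [neg_div, neg_div]
  have h1 : A.charpoly =
      (X ^ 2 + C (((1 + c : ℝ) : ℂ) ^ 2)) * (X ^ 2 + C (((1 - c : ℝ) : ℂ) ^ 2)) := by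
    rw [hA, charpoly_aux _ _ _ hd]
    push_cast
    simp only [map_add, map_sub, map_mul, map_pow, map_one, map_ofNat]
    ring
  refine ⟨h1, ?_, ?_⟩
  · rw [h1, ← factor_aux, ← factor_aux]; ring
  · intro hne
    have hc1 : c ≠ 1 := by
      intro h
      exact hne ((div_eq_one_iff_eq hs.ne').1 h)
    rw [show -(I * ((1 + c : ℝ) : ℂ)) = I * (((-(1 + c)) : ℝ) : ℂ) by push_cast; ring,
      show -(I * ((1 - c : ℝ) : ℂ)) = I * (((-(1 - c)) : ℝ) : ℂ) by push_cast; ring]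
    simp only [List.pairwise_cons, List.mem_cons, List.mem_singleton, List.not_mem_nil,
      List.Pairwise.nil, forall_eq_or_imp, forall_eq, false_implies, implies_true, and_true]
    refine ⟨⟨?_, ?_, ?_⟩, ⟨?_, ?_⟩, ?_⟩
    · exact key_aux _ _ fun h => by linarith
    · exact key_aux _ _ fun h => by linarith
    · exact key_aux _ _ fun h => by linarith
    · exact key_aux _ _ fun h => by linarith
    · exact key_aux _ _ fun h => by linarith
    · exact key_aux _ _ fun h => hc1 (by linarith)
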